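/- Let G = (V,E) be a finite simple graph on N vertices with at least one edge. Then there exist independent sets A_1,…,A_N ⊆ V that are linearly independent over 𝔽₂ (no nonempty subfamily has empty symmetric difference), a vertex T with s^{A_j}_T ∈ {−1,+1} for every j, and positive integers m_1,…,m_N with Σ_{j : s^{A_j}_T = +1} m_j = Σ_{j : s^{A_j}_T = −1} m_j =: W, such that the weighted Bell expression B = Σ_{j=1}^N m_j · (A_T + s^{A_j}_T B_T) · ∏_{i≠T} O_i(s^{A_j}_i) satisfies: (i) the maximum of its value over all deterministic local hidden-variable assignments equals β_C = 2W; and (ii) with the ideal observables (A_T = (X_T+Z_T)/√2, B_T = (X_T−Z_T)/√2, and A_i = X_i, B_i = Z_i for i ≠ T), the graph state gives ⟨ψ_G | B | ψ_G⟩ = √2 · β_C. Hence the quantum-to-classical ratio √2 is achieved using only the 2N correlation functions arising from the N stabilizer sequences. -/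

import Mathlib

/-!
STATEMENT 8: for every graph with at least one edge there is a weighted Bell
expression, built from `N` 𝔽₂-independent stabilizer sign sequences all
nontrivial at a common vertex `T` and with balanced weights, whose classical
maximum is `β_C = 2W` and whose graph-state quantum value (with the ideal
observables) is `√2 · β_C`.
-/

open scoped InnerProductSpace

noncomputable section

variable {V : Type} [Fintype V] [DecidableEq V]

/-- The Hilbert space of `|V|` qubits, `ℂ^({0,1}^V)`. -/
abbrev QState (V : Type) [Fintype V] [DecidableEq V] :=
  EuclideanSpace ℂ (V → Bool)

/-- The Pauli `Z` operator on qubit `v`. -/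
def pauliZ (v : V) : QState V →ₗ[ℂ] QState V where
  toFun ψ := WithLp.toLp 2 (fun x => (if x v then -1 else 1) * ψ x)
  map_add' ψ φ := by
    ext x
    simp [mul_add]
  map_smul' c ψ := by
    ext x
    simp [mul_comm, mul_left_comm]

/-- The Pauli `X` operator on qubit `v`. -/
def pauliX (v : V) : QState V →ₗ[ℂ] QState V where
  toFun ψ := WithLp.toLp 2 (fun x => ψ (Function.update x v (!x v)))
  map_add' ψ φ := by ext x; simp
  map_smul' c ψ := by ext x; simp

/-- The number `q(x)` of edges of `G` whose two endpoints both carry the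
value `1` in the configuration `x`. -/
def edgeCount (G : SimpleGraph V) [DecidableRel G.Adj] (x : V → Bool) : ℕ :=
  (G.edgeFinset.filter fun e =>
    Sym2.lift ⟨fun a b => x a && x b, fun _ _ => Bool.and_comm _ _⟩ e = true).card

/-- The graph state `ψ_G`, with amplitudes `(−1)^{q(x)} / 2^{N/2}`. -/
def graphState (G : SimpleGraph V) [DecidableRel G.Adj] : QState V :=
  WithLp.toLp 2 (fun x => (-1 : ℂ) ^ edgeCount G x / ((Real.sqrt 2 : ℝ) : ℂ) ^ Fintype.card V)

/-- The stabilizer sign sequence `s^A` of an independent set `A`. -/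
def signSeq (G : SimpleGraph V) [DecidableRel G.Adj] (A : Finset V) (v : V) : ℤ :=
  if v ∈ A then 1 else if Odd (G.neighborFinset v ∩ A).card then -1 else 0

/-- Observable associated to the symbol `k` (quantum side). -/
def obsV (Ao Bo : V → QState V →ₗ[ℂ] QState V) (i : V) (k : ℤ) :
    QState V →ₗ[ℂ] QState V :=
  if k = 1 then Ao i else if k = -1 then Bo i else 1

/-- Value associated to the symbol `k` (classical side):
`p_i(0) = 1`, `p_i(+1) = a_i`, `p_i(-1) = b_i`. -/
def clObsV (a b : V → ℤ) (i : V) (k : ℤ) : ℤ :=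
  if k = 1 then a i else if k = -1 then b i else 1

/-- The ideal observable `A_i`: `(X_i + Z_i)/√2` for `i ∈ AC`, `X_i` otherwise. -/
def idealA (AC : Finset V) (i : V) : QState V →ₗ[ℂ] QState V :=
  if i ∈ AC then ((Real.sqrt 2 : ℝ) : ℂ)⁻¹ • (pauliX i + pauliZ i) else pauliX i

/-- The ideal observable `B_i`: `(X_i − Z_i)/√2` for `i ∈ AC`, `Z_i` otherwise. -/
def idealB (AC : Finset V) (i : V) : QState V →ₗ[ℂ] QState V :=
  if i ∈ AC then ((Real.sqrt 2 : ℝ) : ℂ)⁻¹ • (pauliX i - pauliZ i) else pauliZ i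

section Lemmas
set_option linter.unusedSectionVars false

variable (G : SimpleGraph V) [DecidableRel G.Adj]

/-- `eps x v = (-1)^{x v}`. -/
def eps (x : V → Bool) (v : V) : ℂ := if x v then -1 else 1

lemma eps_sq (x : V → Bool) (v : V) : eps x v * eps x v = 1 := by
  unfold eps; by_cases h : x v <;> simp [h]

/-- Abbreviation for the both-endpoints-true predicate. -/
def bt (x : V → Bool) : Sym2 V → Bool :=
  Sym2.lift ⟨fun a b => x a && x b, fun _ _ => Bool.and_comm _ _⟩

lemma edgeCount_eq (x : V → Bool) :
    edgeCount G x = (G.edgeFinset.filter fun e => bt x e = true).card := rfl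

lemma bt_mk (x : V → Bool) (a b : V) : bt x s(a, b) = (x a && x b) := rfl

lemma incident_filter_eq (v : V) (y : V → Bool) :
    G.edgeFinset.filter (fun e => bt y e = true ∧ v ∈ e) =
      ((G.neighborFinset v).filter (fun w => y v && y w)).image (fun w => s(v, w)) := by
  ext e
  induction e using Sym2.ind with
  | _ a b =>
    simp only [Finset.mem_filter, SimpleGraph.mem_edgeFinset, SimpleGraph.mem_edgeSet,
      Finset.mem_image, SimpleGraph.mem_neighborFinset, Sym2.mem_iff, bt_mk]
    constructor
    · rintro ⟨hadj, hbt, hv | hv⟩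
      · subst hv
        exact ⟨b, ⟨hadj, hbt⟩, rfl⟩
      · subst hv
        refine ⟨a, ⟨hadj.symm, ?_⟩, Sym2.eq_swap⟩
        rwa [Bool.and_comm]
    · rintro ⟨w, ⟨hadj, hbt⟩, hw⟩
      rw [Sym2.eq_iff] at hw
      rcases hw with ⟨rfl, rfl⟩ | ⟨rfl, rfl⟩
      · exact ⟨hadj, hbt, Or.inl rfl⟩
      · exact ⟨hadj.symm, by rwa [Bool.and_comm], Or.inr rfl⟩

lemma edgeCount_split (v : V) (y : V → Bool) :
    edgeCount G y =
      (if y v = true then ((G.neighborFinset v).filter (fun w => y w = true)).card else 0) +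
      (G.edgeFinset.filter (fun e => bt y e = true ∧ v ∉ e)).card := by
  rw [edgeCount_eq]
  have h := Finset.card_filter_add_card_filter_not
    (s := G.edgeFinset.filter fun e => bt y e = true) (p := fun e => v ∈ e)
  rw [Finset.filter_filter, Finset.filter_filter] at h
  rw [← h, incident_filter_eq]
  congr 1
  rw [Finset.card_image_of_injective _ (fun w1 w2 h => Sym2.congr_right.mp h)]
  by_cases hv : y v = true
  · simp [hv]
  · have hv' : y v = false := Bool.not_eq_true _ |>.mp hv
    have hemp : ((G.neighborFinset v).filter (fun w => y v && y w)) = ∅ := by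
      apply Finset.filter_false_of_mem; intro w _; simp [hv']
    simp [hv, hemp]

lemma parity_flip_single (v : V) (x : V → Bool) :
    (-1 : ℂ) ^ edgeCount G (Function.update x v (!x v)) =
      (-1) ^ edgeCount G x * ∏ w ∈ G.neighborFinset v, eps x w := by
  set x' := Function.update x v (!x v) with hx'
  have hne : ∀ w ∈ G.neighborFinset v, w ≠ v := by
    intro w hw
    exact ((SimpleGraph.mem_neighborFinset _ _ _).mp hw).ne'
  have hsame : ((G.neighborFinset v).filter (fun w => x' w = true)) =
      ((G.neighborFinset v).filter (fun w => x w = true)) := by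
    apply Finset.filter_congr
    intro w hw
    rw [hx', Function.update_of_ne (hne w hw)]
  have hnon : (G.edgeFinset.filter (fun e => bt x' e = true ∧ v ∉ e)) =
      (G.edgeFinset.filter (fun e => bt x e = true ∧ v ∉ e)) := by
    apply Finset.filter_congr
    intro e _
    induction e using Sym2.ind with
    | _ a b =>
      by_cases hv : v ∈ s(a, b)
      · simp [hv]
      · rw [Sym2.mem_iff] at hv
        push_neg at hv
        simp only [bt_mk, hx']
        rw [Function.update_of_ne (Ne.symm hv.1), Function.update_of_ne (Ne.symm hv.2)]
  rw [edgeCount_split G v x', edgeCount_split G v x, hsame, hnon]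
  have hxv : x' v = !x v := Function.update_self v (!x v) x
  set k := ((G.neighborFinset v).filter (fun w => x w = true)).card with hk
  set n2 := (G.edgeFinset.filter (fun e => bt x e = true ∧ v ∉ e)).card with hn2
  have hprod : ∏ w ∈ G.neighborFinset v, eps x w = (-1 : ℂ) ^ k := by
    rw [hk]
    unfold eps
    rw [Finset.prod_ite, Finset.prod_const, Finset.prod_const, one_pow, mul_one]
  rw [hprod]
  have hkk : (-1 : ℂ) ^ k * (-1 : ℂ) ^ k = 1 := by
    rw [← pow_add, ← two_mul, pow_mul]; norm_num
  by_cases hv : x v = true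
  · rw [hxv, hv]
    simp only [Bool.not_true, if_neg (by simp : ¬(false = true)), if_true, zero_add]
    linear_combination (-(-1 : ℂ) ^ n2) * hkk
  · have hv' : x v = false := Bool.not_eq_true _ |>.mp hv
    rw [hxv, hv']
    simp only [Bool.not_false, if_true, if_neg (by simp : ¬(false = true)), zero_add]
    rw [pow_add]
    ring

/-- Flip the bits of `x` on the set `A`. -/
def flipA (A : Finset V) (x : V → Bool) : V → Bool := fun v => if v ∈ A then !x v else x v

lemma parity_flipA (A : Finset V) (hind : ∀ u ∈ A, ∀ w ∈ A, ¬ G.Adj u w) (x : V → Bool) :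
    (-1 : ℂ) ^ edgeCount G (flipA A x) =
      (-1) ^ edgeCount G x * ∏ u ∈ A, ∏ w ∈ G.neighborFinset u, eps x w := by
  induction A using Finset.induction_on generalizing x with
  | empty =>
      have : flipA ∅ x = x := by funext v; simp [flipA]
      simp [this]
  | @insert a A' ha IH =>
      have hind' : ∀ u ∈ A', ∀ w ∈ A', ¬ G.Adj u w := by
        intro u hu w hw
        exact hind u (Finset.mem_insert_of_mem hu) w (Finset.mem_insert_of_mem hw)
      set x1 := Function.update x a (!x a) with hx1
      have hflip : flipA (insert a A') x = flipA A' x1 := by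
        funext v
        by_cases hv : v = a
        · subst hv
          simp [flipA, ha, hx1, Function.update_self]
        · by_cases hv' : v ∈ A' <;>
            simp [flipA, hv, hv', Function.update_of_ne hv, hx1]
      have heps : ∀ u ∈ A', ∀ w ∈ G.neighborFinset u, eps x1 w = eps x w := by
        intro u hu w hw
        have hadj : G.Adj u w := (SimpleGraph.mem_neighborFinset _ _ _).mp hw
        have hwa : w ≠ a := by
          intro h
          subst h
          exact hind u (Finset.mem_insert_of_mem hu) w (Finset.mem_insert_self _ _) hadj
        unfold eps
        rw [hx1, Function.update_of_ne hwa]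
      rw [hflip, IH hind' x1]
      rw [parity_flip_single G a x]
      rw [Finset.prod_insert ha]
      rw [Finset.prod_congr rfl (fun u hu => Finset.prod_congr rfl (heps u hu))]
      ring

lemma neighbor_inter_indep (A : Finset V) (hind : ∀ u ∈ A, ∀ w ∈ A, ¬ G.Adj u w)
    (w : V) (hw : w ∈ A) : G.neighborFinset w ∩ A = ∅ := by
  apply Finset.eq_empty_of_forall_notMem
  intro u hu
  rw [Finset.mem_inter, SimpleGraph.mem_neighborFinset] at hu
  exact hind w hw u hu.2 hu.1

lemma signSeq_eq_one_iff (A : Finset V) (v : V) :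
    signSeq G A v = 1 ↔ v ∈ A := by
  unfold signSeq
  by_cases hv : v ∈ A
  · simp [hv]
  · by_cases ho : Odd (G.neighborFinset v ∩ A).card <;> simp [hv, ho]

lemma signSeq_eq_neg_one_iff (A : Finset V) (v : V) :
    signSeq G A v = -1 ↔ v ∉ A ∧ Odd (G.neighborFinset v ∩ A).card := by
  unfold signSeq
  by_cases hv : v ∈ A
  · simp [hv]
  · by_cases ho : Odd (G.neighborFinset v ∩ A).card <;> simp [hv, ho]

lemma sign_prod_eq (A : Finset V) (hind : ∀ u ∈ A, ∀ w ∈ A, ¬ G.Adj u w) (x : V → Bool) :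
    (∏ v ∈ Finset.univ, (if signSeq G A v = -1 ∧ x v = true then (-1 : ℂ) else 1)) =
      ∏ u ∈ A, ∏ w ∈ G.neighborFinset u, eps x w := by
  have hswap : ∀ u : V, ∏ w ∈ G.neighborFinset u, eps x w =
      ∏ w ∈ Finset.univ, (if w ∈ G.neighborFinset u then eps x w else 1) := by
    intro u
    rw [Finset.prod_ite_mem, Finset.univ_inter]
  rw [Finset.prod_congr rfl (fun u _ => hswap u)]
  rw [Finset.prod_comm]
  apply Finset.prod_congr rfl
  intro w _
  have hfilter : (A.filter (fun u => w ∈ G.neighborFinset u)) = G.neighborFinset w ∩ A := by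
    ext u
    simp only [Finset.mem_filter, Finset.mem_inter, SimpleGraph.mem_neighborFinset]
    constructor
    · rintro ⟨hu, hadj⟩; exact ⟨hadj.symm, hu⟩
    · rintro ⟨hadj, hu⟩; exact ⟨hu, hadj.symm⟩
  have hpow : ∏ u ∈ A, (if w ∈ G.neighborFinset u then eps x w else 1) =
      eps x w ^ (G.neighborFinset w ∩ A).card := by
    rw [Finset.prod_ite, Finset.prod_const, Finset.prod_const, one_pow, mul_one, hfilter]
  rw [hpow]
  by_cases hw : w ∈ A
  · rw [neighbor_inter_indep G A hind w hw]
    have : signSeq G A w = 1 := (signSeq_eq_one_iff G A w).mpr hw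
    simp [this]
  · by_cases ho : Odd (G.neighborFinset w ∩ A).card
    · have hs : signSeq G A w = -1 := (signSeq_eq_neg_one_iff G A w).mpr ⟨hw, ho⟩
      by_cases hx : x w = true
      · rw [if_pos ⟨hs, hx⟩]
        unfold eps
        rw [if_pos hx, ho.neg_one_pow]
      · rw [if_neg (fun h => hx h.2)]
        unfold eps
        rw [if_neg hx, one_pow]
    · have hs : ¬ (signSeq G A w = -1) := by
        rw [signSeq_eq_neg_one_iff]
        tauto
      rw [if_neg (by tauto)]
      rw [Nat.not_odd_iff_even] at ho
      unfold eps
      by_cases hx : x w = true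
      · rw [if_pos hx, ho.neg_one_pow]
      · rw [if_neg hx, one_pow]

lemma stab_eigen (A : Finset V) (hind : ∀ u ∈ A, ∀ w ∈ A, ¬ G.Adj u w) (x : V → Bool) :
    (∏ v ∈ Finset.univ, (if signSeq G A v = -1 ∧ x v = true then (-1 : ℂ) else 1)) *
      graphState G (flipA A x) = graphState G x := by
  unfold graphState
  simp only [PiLp.toLp_apply]
  rw [sign_prod_eq G A hind x]
  rw [div_eq_mul_inv, div_eq_mul_inv, ← mul_assoc, mul_comm _ ((-1:ℂ) ^ edgeCount G (flipA A x)),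
    parity_flipA G A hind x]
  have hP : (∏ u ∈ A, ∏ w ∈ G.neighborFinset u, eps x w) *
      (∏ u ∈ A, ∏ w ∈ G.neighborFinset u, eps x w) = 1 := by
    rw [← Finset.prod_mul_distrib]
    have h1 : ∀ u ∈ A, (∏ w ∈ G.neighborFinset u, eps x w) *
        (∏ w ∈ G.neighborFinset u, eps x w) = 1 := by
      intro u _
      rw [← Finset.prod_mul_distrib, Finset.prod_congr rfl (fun w _ => eps_sq x w)]
      exact Finset.prod_const_one
    rw [Finset.prod_congr rfl h1]
    exact Finset.prod_const_one
  calc (-1:ℂ) ^ edgeCount G x * (∏ u ∈ A, ∏ w ∈ G.neighborFinset u, eps x w) *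
        (∏ u ∈ A, ∏ w ∈ G.neighborFinset u, eps x w) *
        (((Real.sqrt 2 : ℝ) : ℂ) ^ Fintype.card V)⁻¹
      = (-1:ℂ) ^ edgeCount G x * (((∏ u ∈ A, ∏ w ∈ G.neighborFinset u, eps x w) *
          (∏ u ∈ A, ∏ w ∈ G.neighborFinset u, eps x w)) *
          (((Real.sqrt 2 : ℝ) : ℂ) ^ Fintype.card V)⁻¹) := by ring
    _ = (-1:ℂ) ^ edgeCount G x * (((Real.sqrt 2 : ℝ) : ℂ) ^ Fintype.card V)⁻¹ := by
          rw [hP, one_mul]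

lemma obsV_ideal (T i : V) (hi : i ≠ T) (k : ℤ) :
    obsV (idealA {T}) (idealB {T}) i k =
      if k = 1 then pauliX i else if k = -1 then pauliZ i else 1 := by
  have hA : idealA {T} i = pauliX i := by
    unfold idealA; rw [if_neg (by simpa using hi)]
  have hB : idealB {T} i = pauliZ i := by
    unfold idealB; rw [if_neg (by simpa using hi)]
  unfold obsV
  rw [hA, hB]

lemma pauliX_apply (v : V) (ψ : QState V) (x : V → Bool) :
    (pauliX v ψ) x = ψ (Function.update x v (!x v)) := rfl

lemma pauliZ_apply (v : V) (ψ : QState V) (x : V → Bool) :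
    (pauliZ v ψ) x = (if x v then -1 else 1) * ψ x := rfl

lemma list_prod_apply (T : V) (σ : V → ℤ) (l : List V) (hnd : l.Nodup)
    (hT : ∀ i ∈ l, i ≠ T) (ψ : QState V) (x : V → Bool) :
    ((l.map (fun i => obsV (idealA {T}) (idealB {T}) i (σ i))).prod ψ) x =
      (∏ i ∈ l.toFinset, (if σ i = -1 ∧ x i = true then (-1 : ℂ) else 1)) *
        ψ (fun v => if v ∈ l.toFinset ∧ σ v = 1 then !x v else x v) := by
  induction l generalizing x with
  | nil =>
      have : (fun v => if v ∈ ([] : List V).toFinset ∧ σ v = 1 then !x v else x v) = x := by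
        funext v; simp
      simp [this]
  | cons hd tl IH =>
      have hhd : hd ∉ tl := (List.nodup_cons.mp hnd).1
      have hndtl : tl.Nodup := (List.nodup_cons.mp hnd).2
      have hTtl : ∀ i ∈ tl, i ≠ T := fun i hi => hT i (List.mem_cons_of_mem _ hi)
      have hhdF : hd ∉ tl.toFinset := fun h => hhd (List.mem_toFinset.mp h)
      rw [List.map_cons, List.prod_cons, Module.End.mul_apply,
        obsV_ideal T hd (hT hd List.mem_cons_self)]
      rw [List.toFinset_cons, Finset.prod_insert hhdF]
      by_cases h1 : σ hd = 1
      · rw [if_pos h1, pauliX_apply, IH hndtl hTtl (Function.update x hd (!x hd))]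
        have hprod : (∏ i ∈ tl.toFinset,
            (if σ i = -1 ∧ Function.update x hd (!x hd) i = true then (-1 : ℂ) else 1)) =
            ∏ i ∈ tl.toFinset, (if σ i = -1 ∧ x i = true then (-1 : ℂ) else 1) := by
          apply Finset.prod_congr rfl
          intro i hi
          rw [Function.update_of_ne (by rintro rfl; exact hhdF hi)]
        have hfun : (fun v => if v ∈ tl.toFinset ∧ σ v = 1
              then !(Function.update x hd (!x hd) v) else Function.update x hd (!x hd) v) =
            (fun v => if v ∈ insert hd tl.toFinset ∧ σ v = 1 then !x v else x v) := by
          funext v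
          by_cases hv : v = hd
          · subst hv
            rw [Function.update_self]
            rw [if_neg (fun h => hhdF h.1), if_pos ⟨Finset.mem_insert_self _ _, h1⟩]
          · rw [Function.update_of_ne hv]
            by_cases hm : v ∈ tl.toFinset ∧ σ v = 1
            · rw [if_pos hm, if_pos ⟨Finset.mem_insert_of_mem hm.1, hm.2⟩]
            · rw [if_neg hm, if_neg (fun h => hm ⟨(Finset.mem_insert.mp h.1).resolve_left
                (fun he => hv he), h.2⟩)]
        rw [hprod, hfun, if_neg (fun h => by rw [h1] at h; exact absurd h.1 (by decide))]
        ring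
      · by_cases h2 : σ hd = -1
        · rw [if_neg h1, if_pos h2, pauliZ_apply, IH hndtl hTtl x]
          have hfun : (fun v => if v ∈ tl.toFinset ∧ σ v = 1 then !x v else x v) =
              (fun v => if v ∈ insert hd tl.toFinset ∧ σ v = 1 then !x v else x v) := by
            funext v
            by_cases hv : v = hd
            · subst hv
              rw [if_neg (fun h => hhdF h.1), if_neg (fun h => h1 h.2)]
            · by_cases hm : v ∈ tl.toFinset ∧ σ v = 1
              · rw [if_pos hm, if_pos ⟨Finset.mem_insert_of_mem hm.1, hm.2⟩]
              · rw [if_neg hm, if_neg (fun h => hm ⟨(Finset.mem_insert.mp h.1).resolve_left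
                  (fun he => hv he), h.2⟩)]
          have hfac : (if σ hd = -1 ∧ x hd = true then (-1 : ℂ) else 1) =
              (if x hd then -1 else 1) := by
            by_cases hx : x hd = true
            · rw [if_pos ⟨h2, hx⟩, if_pos hx]
            · rw [if_neg (fun h => hx h.2), if_neg hx]
          rw [hfun, hfac]
          ring
        · rw [if_neg h1, if_neg h2, Module.End.one_apply, IH hndtl hTtl x]
          have hfun : (fun v => if v ∈ tl.toFinset ∧ σ v = 1 then !x v else x v) =
              (fun v => if v ∈ insert hd tl.toFinset ∧ σ v = 1 then !x v else x v) := by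
            funext v
            by_cases hv : v = hd
            · subst hv
              rw [if_neg (fun h => hhdF h.1), if_neg (fun h => h1 h.2)]
            · by_cases hm : v ∈ tl.toFinset ∧ σ v = 1
              · rw [if_pos hm, if_pos ⟨Finset.mem_insert_of_mem hm.1, hm.2⟩]
              · rw [if_neg hm, if_neg (fun h => hm ⟨(Finset.mem_insert.mp h.1).resolve_left
                  (fun he => hv he), h.2⟩)]
          rw [hfun, if_neg (fun h => h2 h.1)]
          ring

lemma sqrt2_mul_self : ((Real.sqrt 2 : ℝ) : ℂ) * ((Real.sqrt 2 : ℝ) : ℂ) = 2 := by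
  rw [← Complex.ofReal_mul, Real.mul_self_sqrt (by norm_num : (0:ℝ) ≤ 2)]
  norm_num

lemma sqrt2_ne_zero : ((Real.sqrt 2 : ℝ) : ℂ) ≠ 0 := by
  rw [Complex.ofReal_ne_zero]
  positivity

lemma inv_sqrt2_mul_two : ((Real.sqrt 2 : ℝ) : ℂ)⁻¹ * 2 = ((Real.sqrt 2 : ℝ) : ℂ) := by
  rw [inv_mul_eq_div, eq_comm, eq_div_iff sqrt2_ne_zero]
  exact sqrt2_mul_self

lemma op_eigen (A : Finset V) (hind : ∀ u ∈ A, ∀ w ∈ A, ¬ G.Adj u w) (T : V)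
    (hT : signSeq G A T = 1 ∨ signSeq G A T = -1) :
    ((idealA {T} T + signSeq G A T • idealB {T} T) *
      ((Finset.univ.erase T).toList.map
        (fun i => obsV (idealA {T}) (idealB {T}) i (signSeq G A i))).prod) (graphState G) =
    ((Real.sqrt 2 : ℝ) : ℂ) • graphState G := by
  set Φ := (((Finset.univ.erase T).toList.map
      (fun i => obsV (idealA {T}) (idealB {T}) i (signSeq G A i))).prod) (graphState G) with hΦ
  have hlist : ∀ x : V → Bool, Φ x =
      (∏ i ∈ Finset.univ.erase T,
          (if signSeq G A i = -1 ∧ x i = true then (-1 : ℂ) else 1)) *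
        graphState G (fun v => if v ∈ Finset.univ.erase T ∧ signSeq G A v = 1
          then !x v else x v) := by
    intro x
    rw [hΦ, list_prod_apply T (signSeq G A) _ (Finset.nodup_toList _)
      (fun i hi => (Finset.mem_erase.mp (Finset.mem_toList.mp hi)).1) (graphState G) x]
    rw [Finset.toList_toFinset]
  rw [Module.End.mul_apply, ← hΦ]
  rcases hT with hs | hs
  · -- sign +1 : T ∈ A, operator acts as √2 · X_T
    have hTA : T ∈ A := (signSeq_eq_one_iff G A T).mp hs
    have h1 : idealA {T} T + signSeq G A T • idealB {T} T =
        ((Real.sqrt 2 : ℝ) : ℂ) • pauliX T := by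
      rw [hs, one_smul]
      unfold idealA idealB
      rw [if_pos (Finset.mem_singleton_self T), if_pos (Finset.mem_singleton_self T),
        ← smul_add]
      have hXZ : (pauliX T + pauliZ T) + (pauliX T - pauliZ T) = (2 : ℂ) • pauliX T := by
        rw [two_smul]; abel
      rw [hXZ, smul_smul, inv_sqrt2_mul_two]
    rw [h1]
    ext x
    have hLHS : ((((Real.sqrt 2 : ℝ) : ℂ) • pauliX T) Φ) x
        = ((Real.sqrt 2 : ℝ) : ℂ) * Φ (Function.update x T (!x T)) := rfl
    rw [hLHS, hlist]
    set y := Function.update x T (!x T) with hy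
    have hprod : (∏ i ∈ Finset.univ.erase T,
        (if signSeq G A i = -1 ∧ y i = true then (-1:ℂ) else 1))
        = ∏ i ∈ Finset.univ.erase T,
            (if signSeq G A i = -1 ∧ x i = true then (-1:ℂ) else 1) := by
      apply Finset.prod_congr rfl
      intro i hi
      rw [hy, Function.update_of_ne (Finset.mem_erase.mp hi).1]
    have hTfac : (if signSeq G A T = -1 ∧ x T = true then (-1:ℂ) else 1) = 1 := by
      rw [if_neg]; rintro ⟨h, -⟩; rw [hs] at h; exact absurd h (by decide)
    have hprge : (∏ i ∈ Finset.univ.erase T,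
        (if signSeq G A i = -1 ∧ x i = true then (-1:ℂ) else 1))
        = ∏ i ∈ Finset.univ,
            (if signSeq G A i = -1 ∧ x i = true then (-1:ℂ) else 1) := by
      rw [← Finset.mul_prod_erase Finset.univ _ (Finset.mem_univ T), hTfac, one_mul]
    have hfun : (fun v => if v ∈ Finset.univ.erase T ∧ signSeq G A v = 1
          then !(y v) else y v) = flipA A x := by
      funext v
      by_cases hv : v = T
      · subst hv
        rw [if_neg (fun h => (Finset.mem_erase.mp h.1).1 rfl), hy, Function.update_self]
        simp only [flipA]
        rw [if_pos hTA]
      · have hyv : y v = x v := by rw [hy, Function.update_of_ne hv]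
        simp only [flipA]
        by_cases hvA : v ∈ A
        · rw [if_pos ⟨Finset.mem_erase.mpr ⟨hv, Finset.mem_univ v⟩,
            (signSeq_eq_one_iff G A v).mpr hvA⟩, if_pos hvA, hyv]
        · rw [if_neg (fun h => hvA ((signSeq_eq_one_iff G A v).mp h.2)),
            if_neg hvA, hyv]
    rw [hprod, hprge, hfun, stab_eigen G A hind x]
    rfl
  · -- sign −1 : T ∉ A, operator acts as √2 · Z_T
    have hTA : T ∉ A := ((signSeq_eq_neg_one_iff G A T).mp hs).1
    have h1 : idealA {T} T + signSeq G A T • idealB {T} T =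
        ((Real.sqrt 2 : ℝ) : ℂ) • pauliZ T := by
      rw [hs, neg_smul, one_smul, ← sub_eq_add_neg]
      unfold idealA idealB
      rw [if_pos (Finset.mem_singleton_self T), if_pos (Finset.mem_singleton_self T),
        ← smul_sub]
      have hXZ : (pauliX T + pauliZ T) - (pauliX T - pauliZ T) = (2 : ℂ) • pauliZ T := by
        rw [two_smul]; abel
      rw [hXZ, smul_smul, inv_sqrt2_mul_two]
    rw [h1]
    ext x
    have hLHS : ((((Real.sqrt 2 : ℝ) : ℂ) • pauliZ T) Φ) x
        = ((Real.sqrt 2 : ℝ) : ℂ) * ((if x T then -1 else 1) * Φ x) := rfl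
    rw [hLHS, hlist]
    have hTfac : (if signSeq G A T = -1 ∧ x T = true then (-1:ℂ) else 1)
        = (if x T then -1 else 1) := by
      by_cases hx : x T = true
      · rw [if_pos ⟨hs, hx⟩, if_pos hx]
      · rw [if_neg (fun h => hx h.2), if_neg hx]
    have hprge : (if x T then (-1:ℂ) else 1) * (∏ i ∈ Finset.univ.erase T,
        (if signSeq G A i = -1 ∧ x i = true then (-1:ℂ) else 1))
        = ∏ i ∈ Finset.univ,
            (if signSeq G A i = -1 ∧ x i = true then (-1:ℂ) else 1) := by
      rw [← Finset.mul_prod_erase Finset.univ _ (Finset.mem_univ T), hTfac]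
    have hfun : (fun v => if v ∈ Finset.univ.erase T ∧ signSeq G A v = 1
          then !x v else x v) = flipA A x := by
      funext v
      by_cases hv : v = T
      · subst hv
        rw [if_neg (fun h => (Finset.mem_erase.mp h.1).1 rfl)]
        simp only [flipA]
        rw [if_neg hTA]
      · simp only [flipA]
        by_cases hvA : v ∈ A
        · rw [if_pos ⟨Finset.mem_erase.mpr ⟨hv, Finset.mem_univ v⟩,
            (signSeq_eq_one_iff G A v).mpr hvA⟩, if_pos hvA]
        · rw [if_neg (fun h => hvA ((signSeq_eq_one_iff G A v).mp h.2)),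
            if_neg hvA]
    rw [hfun]
    have hkey : (if x T then (-1:ℂ) else 1) *
        ((∏ i ∈ Finset.univ.erase T,
          (if signSeq G A i = -1 ∧ x i = true then (-1:ℂ) else 1)) *
          graphState G (flipA A x))
        = (∏ i ∈ Finset.univ,
            (if signSeq G A i = -1 ∧ x i = true then (-1:ℂ) else 1)) *
          graphState G (flipA A x) := by
      rw [← mul_assoc, hprge]
    rw [hkey, stab_eigen G A hind x]
    rfl

lemma gs_inner : ⟪graphState G, graphState G⟫_ℂ = 1 := by
  rw [PiLp.inner_apply]
  have hterm : ∀ x : V → Bool,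
      (starRingEnd ℂ) (graphState G x) * graphState G x
        = ((2 : ℂ) ^ Fintype.card V)⁻¹ := by
    intro x
    unfold graphState
    simp only [PiLp.toLp_apply]
    rw [map_div₀, map_pow, map_pow, map_neg, map_one, Complex.conj_ofReal]
    rw [div_mul_div_comm]
    have h1 : (-1 : ℂ) ^ edgeCount G x * (-1 : ℂ) ^ edgeCount G x = 1 := by
      rw [← pow_add, ← two_mul, pow_mul]; norm_num
    have h2 : ((Real.sqrt 2 : ℝ) : ℂ) ^ Fintype.card V *
        ((Real.sqrt 2 : ℝ) : ℂ) ^ Fintype.card V = (2 : ℂ) ^ Fintype.card V := by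
      rw [← mul_pow, sqrt2_mul_self]
    rw [h1, h2, one_div]
  have : (∑ x : V → Bool, (starRingEnd ℂ) (graphState G x) * graphState G x)
      = ∑ _x : V → Bool, ((2 : ℂ) ^ Fintype.card V)⁻¹ :=
    Finset.sum_congr rfl (fun x _ => hterm x)
  rw [show (∑ x : V → Bool, inner ℂ (graphState G x) (graphState G x))
      = ∑ x : V → Bool, (starRingEnd ℂ) (graphState G x) * graphState G x from
      Finset.sum_congr rfl (fun x _ => by rw [RCLike.inner_apply]; ring)]
  rw [this, Finset.sum_const, Finset.card_univ]
  have hcard : Fintype.card (V → Bool) = 2 ^ Fintype.card V := by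
    rw [Fintype.card_fun, Fintype.card_bool]
  rw [hcard, nsmul_eq_mul]
  push_cast
  rw [mul_inv_cancel₀ (pow_ne_zero _ (two_ne_zero : (2:ℂ) ≠ 0))]

/-- The chosen family of independent sets. -/
def bellA (G : SimpleGraph V) [DecidableRel G.Adj] (u : V) (j : Fin (Fintype.card V)) :
    Finset V :=
  if (Fintype.equivFin V).symm j = u then {u}
  else if G.Adj u ((Fintype.equivFin V).symm j) then {(Fintype.equivFin V).symm j}
  else {(Fintype.equivFin V).symm j, u}

lemma bellA_indep (u : V) (j : Fin (Fintype.card V)) :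
    ∀ x ∈ bellA G u j, ∀ y ∈ bellA G u j, ¬ G.Adj x y := by
  intro x hx y hy
  unfold bellA at hx hy
  set v := (Fintype.equivFin V).symm j with hv
  by_cases h1 : v = u
  · rw [if_pos h1, Finset.mem_singleton] at hx hy
    subst hx; subst hy; exact G.irrefl
  · rw [if_neg h1] at hx hy
    by_cases h2 : G.Adj u v
    · rw [if_pos h2, Finset.mem_singleton] at hx hy
      subst hx; subst hy; exact G.irrefl
    · rw [if_neg h2, Finset.mem_insert, Finset.mem_singleton] at hx hy
      rcases hx with rfl | rfl <;> rcases hy with rfl | rfl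
      · exact G.irrefl
      · exact fun h => h2 h.symm
      · exact h2
      · exact G.irrefl

lemma bellA_subset (u : V) (j : Fin (Fintype.card V)) :
    bellA G u j ⊆ {(Fintype.equivFin V).symm j, u} := by
  unfold bellA
  set v := (Fintype.equivFin V).symm j with hv
  by_cases h1 : v = u
  · rw [if_pos h1]
    intro x hx
    rw [Finset.mem_singleton] at hx
    rw [hx]
    exact Finset.mem_insert_of_mem (Finset.mem_singleton_self u)
  · rw [if_neg h1]
    by_cases h2 : G.Adj u v
    · rw [if_pos h2]
      intro x hx
      rw [Finset.mem_singleton] at hx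
      rw [hx]
      exact Finset.mem_insert_self _ _
    · rw [if_neg h2]

lemma mem_bellA_self (u : V) (j : Fin (Fintype.card V)) :
    (Fintype.equivFin V).symm j ∈ bellA G u j := by
  unfold bellA
  set v := (Fintype.equivFin V).symm j with hv
  by_cases h1 : v = u
  · rw [if_pos h1, h1]; exact Finset.mem_singleton_self u
  · rw [if_neg h1]
    by_cases h2 : G.Adj u v
    · rw [if_pos h2]; exact Finset.mem_singleton_self v
    · rw [if_neg h2]; exact Finset.mem_insert_self _ _

lemma bellA_sign (u : V) (j : Fin (Fintype.card V)) :
    signSeq G (bellA G u j) u =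
      if G.Adj u ((Fintype.equivFin V).symm j) then -1 else 1 := by
  unfold bellA
  set v := (Fintype.equivFin V).symm j with hv
  by_cases h1 : v = u
  · rw [if_pos h1, if_neg (by rw [h1]; exact G.irrefl)]
    unfold signSeq
    rw [if_pos (Finset.mem_singleton_self u)]
  · rw [if_neg h1]
    by_cases h2 : G.Adj u v
    · rw [if_pos h2, if_pos h2]
      unfold signSeq
      rw [if_neg (by rw [Finset.mem_singleton]; exact fun h => h1 h.symm)]
      rw [Finset.inter_singleton_of_mem ((SimpleGraph.mem_neighborFinset _ _ _).mpr h2)]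
      rw [if_pos (by rw [Finset.card_singleton]; exact odd_one)]
    · rw [if_neg h2, if_neg h2]
      unfold signSeq
      rw [if_pos (Finset.mem_insert_of_mem (Finset.mem_singleton_self u))]

/-- Generic classical bound for the Bell expression. -/
lemma classical_bound {n : ℕ} (s : Fin n → ℤ) (hs : ∀ j, s j = 1 ∨ s j = -1)
    (p : Fin n → ℤ) (hp : ∀ j, p j = 1 ∨ p j = -1) (m : Fin n → ℕ) (W : ℕ)
    (hP : (∑ j ∈ Finset.univ.filter (fun j => s j = 1), m j) = W)
    (hM : (∑ j ∈ Finset.univ.filter (fun j => s j = -1), m j) = W)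
    (aT bT : ℤ) (ha : aT = 1 ∨ aT = -1) (hb : bT = 1 ∨ bT = -1) :
    (∑ j : Fin n, (m j : ℤ) * ((aT + s j * bT) * p j)) ≤ 2 * W := by
  have hfilterM : Finset.univ.filter (fun j : Fin n => ¬ s j = 1) =
      Finset.univ.filter (fun j => s j = -1) := by
    apply Finset.filter_congr
    intro j _
    rcases hs j with h | h <;> simp [h]
  have hsplit := Finset.sum_filter_add_sum_filter_not Finset.univ (fun j => s j = 1)
    (fun j => (m j : ℤ) * ((aT + s j * bT) * p j))
  rw [hfilterM] at hsplit
  have hPcast : (∑ j ∈ Finset.univ.filter (fun j => s j = 1), (m j : ℤ)) = (W : ℤ) := by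
    exact_mod_cast congrArg (Nat.cast : ℕ → ℤ) hP
  have hMcast : (∑ j ∈ Finset.univ.filter (fun j => s j = -1), (m j : ℤ)) = (W : ℤ) := by
    exact_mod_cast congrArg (Nat.cast : ℕ → ℤ) hM
  by_cases hab : bT = aT
  · have hM0 : (∑ j ∈ Finset.univ.filter (fun j => s j = -1),
        (m j : ℤ) * ((aT + s j * bT) * p j)) = 0 := by
      apply Finset.sum_eq_zero
      intro j hj
      have hsj : s j = -1 := (Finset.mem_filter.mp hj).2
      rw [hsj, hab]
      ring
    have hPle : (∑ j ∈ Finset.univ.filter (fun j => s j = 1),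
        (m j : ℤ) * ((aT + s j * bT) * p j)) ≤
        ∑ j ∈ Finset.univ.filter (fun j => s j = 1), (m j : ℤ) * 2 := by
      apply Finset.sum_le_sum
      intro j hj
      have hsj : s j = 1 := (Finset.mem_filter.mp hj).2
      apply mul_le_mul_of_nonneg_left _ (by positivity)
      rw [hsj, hab]
      rcases ha with h | h <;> rcases hp j with h' | h' <;> rw [h, h'] <;> norm_num
    have : (∑ j ∈ Finset.univ.filter (fun j => s j = 1), (m j : ℤ) * 2) = 2 * W := by
      rw [← Finset.sum_mul, hPcast]; ring
    rw [← hsplit, hM0, add_zero]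
    rw [this] at hPle
    exact hPle
  · have hab' : bT = -aT := by
      rcases ha with h | h <;> rcases hb with h' | h' <;> omega
    have hP0 : (∑ j ∈ Finset.univ.filter (fun j => s j = 1),
        (m j : ℤ) * ((aT + s j * bT) * p j)) = 0 := by
      apply Finset.sum_eq_zero
      intro j hj
      have hsj : s j = 1 := (Finset.mem_filter.mp hj).2
      rw [hsj, hab']
      ring
    have hMle : (∑ j ∈ Finset.univ.filter (fun j => s j = -1),
        (m j : ℤ) * ((aT + s j * bT) * p j)) ≤
        ∑ j ∈ Finset.univ.filter (fun j => s j = -1), (m j : ℤ) * 2 := by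
      apply Finset.sum_le_sum
      intro j hj
      have hsj : s j = -1 := (Finset.mem_filter.mp hj).2
      apply mul_le_mul_of_nonneg_left _ (by positivity)
      rw [hsj, hab']
      rcases ha with h | h <;> rcases hp j with h' | h' <;> rw [h, h'] <;> norm_num
    have : (∑ j ∈ Finset.univ.filter (fun j => s j = -1), (m j : ℤ) * 2) = 2 * W := by
      rw [← Finset.sum_mul, hMcast]; ring
    rw [← hsplit, hP0, zero_add]
    rw [this] at hMle
    exact hMle

end Lemmas
theorem exists_constant_ratio_bell_inequality
    (G : SimpleGraph V) [DecidableRel G.Adj]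
    (hedge : ∃ u w : V, G.Adj u w) :
    ∃ (A : Fin (Fintype.card V) → Finset V) (T : V)
      (m : Fin (Fintype.card V) → ℕ) (W : ℕ),
      -- the A_j are independent sets
      (∀ j, ∀ u ∈ A j, ∀ w ∈ A j, ¬ G.Adj u w) ∧
      -- the A_j are linearly independent over 𝔽₂
      (∀ S : Finset (Fin (Fintype.card V)), S.Nonempty →
        ∃ v : V, (∑ j ∈ S, if v ∈ A j then (1 : ZMod 2) else 0) ≠ 0) ∧
      -- every sign sequence is nontrivial at T
      (∀ j, signSeq G (A j) T = 1 ∨ signSeq G (A j) T = -1) ∧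
      -- positive weights, balanced at T
      (∀ j, 0 < m j) ∧ 0 < W ∧
      (∑ j ∈ Finset.univ.filter
          (fun j => signSeq G (A j) T = 1), m j) = W ∧
      (∑ j ∈ Finset.univ.filter
          (fun j => signSeq G (A j) T = -1), m j) = W ∧
      -- (i) the classical maximum equals β_C = 2W
      (∀ a b : V → ℤ, (∀ i, a i = 1 ∨ a i = -1) → (∀ i, b i = 1 ∨ b i = -1) →
        (∑ j : Fin (Fintype.card V), (m j : ℤ) *
          ((a T + signSeq G (A j) T * b T) *
            ∏ i ∈ Finset.univ.erase T, clObsV a b i (signSeq G (A j) i)))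
          ≤ 2 * W) ∧
      (∃ a b : V → ℤ, (∀ i, a i = 1 ∨ a i = -1) ∧ (∀ i, b i = 1 ∨ b i = -1) ∧
        (∑ j : Fin (Fintype.card V), (m j : ℤ) *
          ((a T + signSeq G (A j) T * b T) *
            ∏ i ∈ Finset.univ.erase T, clObsV a b i (signSeq G (A j) i)))
          = 2 * W) ∧
      -- (ii) the graph state with the ideal observables reaches √2 · β_C
      ⟪graphState G,
        (∑ j : Fin (Fintype.card V), m j •
          ((idealA {T} T + signSeq G (A j) T • idealB {T} T) *
            ((Finset.univ.erase T).toList.map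
              (fun i => obsV (idealA {T}) (idealB {T}) i
                (signSeq G (A j) i))).prod))
          (graphState G)⟫_ℂ
        = ((Real.sqrt 2 * (2 * W) : ℝ) : ℂ) := by
  classical
  obtain ⟨u, w0, huw⟩ := hedge
  have hsval : ∀ j : Fin (Fintype.card V), signSeq G (bellA G u j) u =
      if G.Adj u ((Fintype.equivFin V).symm j) then -1 else 1 := fun j => bellA_sign G u j
  have hsign : ∀ j, signSeq G (bellA G u j) u = 1 ∨ signSeq G (bellA G u j) u = -1 := by
    intro j
    rw [hsval j]
    by_cases h : G.Adj u ((Fintype.equivFin V).symm j)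
    · right; rw [if_pos h]
    · left; rw [if_neg h]
  set P := Finset.univ.filter
    (fun j : Fin (Fintype.card V) => signSeq G (bellA G u j) u = 1) with hPdef
  set M := Finset.univ.filter
    (fun j : Fin (Fintype.card V) => signSeq G (bellA G u j) u = -1) with hMdef
  have hPpos : 0 < P.card := by
    apply Finset.card_pos.mpr
    refine ⟨(Fintype.equivFin V) u, ?_⟩
    rw [hPdef, Finset.mem_filter]
    refine ⟨Finset.mem_univ _, ?_⟩
    rw [hsval, Equiv.symm_apply_apply, if_neg (G.irrefl)]
  have hMpos : 0 < M.card := by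
    apply Finset.card_pos.mpr
    refine ⟨(Fintype.equivFin V) w0, ?_⟩
    rw [hMdef, Finset.mem_filter]
    refine ⟨Finset.mem_univ _, ?_⟩
    rw [hsval, Equiv.symm_apply_apply, if_pos huw]
  set m : Fin (Fintype.card V) → ℕ :=
    fun j => if signSeq G (bellA G u j) u = 1 then M.card else P.card with hmdef
  set W := P.card * M.card with hWdef
  have hMnot : Finset.univ.filter
      (fun j : Fin (Fintype.card V) => ¬ signSeq G (bellA G u j) u = 1) = M := by
    rw [hMdef]
    apply Finset.filter_congr
    intro j _
    rcases hsign j with h | h <;> simp [h]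
  have hsumP : (∑ j ∈ P, m j) = W := by
    have : ∀ j ∈ P, m j = M.card := by
      intro j hj
      simp only [hmdef]
      exact if_pos (Finset.mem_filter.mp hj).2
    rw [Finset.sum_congr rfl this, Finset.sum_const, smul_eq_mul, hWdef]
  have hsumM : (∑ j ∈ M, m j) = W := by
    have : ∀ j ∈ M, m j = P.card := by
      intro j hj
      simp only [hmdef]
      have hsj : signSeq G (bellA G u j) u = -1 := (Finset.mem_filter.mp hj).2
      rw [if_neg (by rw [hsj]; decide)]
    rw [Finset.sum_congr rfl this, Finset.sum_const, smul_eq_mul, hWdef, mul_comm]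
  have hmtot : (∑ j : Fin (Fintype.card V), m j) = 2 * W := by
    have h := Finset.sum_filter_add_sum_filter_not Finset.univ
      (fun j : Fin (Fintype.card V) => signSeq G (bellA G u j) u = 1) m
    rw [hMnot] at h
    rw [← h, hsumP, hsumM]
    ring
  refine ⟨bellA G u, u, m, W, fun j => bellA_indep G u j, ?_, hsign,
    ?_, ?_, hsumP, hsumM, ?_, ?_, ?_⟩
  · -- 𝔽₂ independence
    intro S hS
    by_cases hcase : ∃ j ∈ S, (Fintype.equivFin V).symm j ≠ u
    · obtain ⟨j0, hj0S, hj0⟩ := hcase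
      refine ⟨(Fintype.equivFin V).symm j0, ?_⟩
      have hterm : ∀ j ∈ S,
          (if (Fintype.equivFin V).symm j0 ∈ bellA G u j then (1 : ZMod 2) else 0) =
          if j = j0 then 1 else 0 := by
        intro j _
        by_cases h : j = j0
        · subst h
          rw [if_pos (mem_bellA_self G u j), if_pos rfl]
        · rw [if_neg h, if_neg]
          intro hmem
          have hsub := bellA_subset G u j hmem
          rw [Finset.mem_insert, Finset.mem_singleton] at hsub
          rcases hsub with h' | h'
          · exact h ((Fintype.equivFin V).symm.injective h').symm
          · exact hj0 h'
      rw [Finset.sum_congr rfl hterm, Finset.sum_ite_eq' S j0 (fun _ => (1 : ZMod 2)),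
        if_pos hj0S]
      exact one_ne_zero
    · push_neg at hcase
      obtain ⟨j0, hj0⟩ := hS
      have hSsing : S = {j0} := by
        apply Finset.eq_singleton_iff_unique_mem.mpr
        refine ⟨hj0, ?_⟩
        intro j hj
        apply (Fintype.equivFin V).symm.injective
        rw [hcase j hj, hcase j0 hj0]
      refine ⟨u, ?_⟩
      rw [hSsing, Finset.sum_singleton, if_pos]
      · exact one_ne_zero
      · have : bellA G u j0 = {u} := by
          unfold bellA
          rw [if_pos (hcase j0 hj0)]
        rw [this]
        exact Finset.mem_singleton_self u
  · -- positivity of weights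
    intro j
    simp only [hmdef]
    by_cases h : signSeq G (bellA G u j) u = 1
    · rw [if_pos h]; exact hMpos
    · rw [if_neg h]; exact hPpos
  · -- positivity of W
    exact Nat.mul_pos hPpos hMpos
  · -- classical upper bound
    intro a b ha hb
    apply classical_bound (fun j => signSeq G (bellA G u j) u) hsign
      (fun j => ∏ i ∈ Finset.univ.erase u, clObsV a b i (signSeq G (bellA G u j) i))
      ?_ m W hsumP hsumM (a u) (b u) (ha u) (hb u)
    intro j
    apply Finset.prod_induction _ (fun z : ℤ => z = 1 ∨ z = -1)
    · rintro x y (rfl | rfl) (rfl | rfl) <;> norm_num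
    · exact Or.inl rfl
    · intro i _
      unfold clObsV
      split_ifs
      · exact ha i
      · exact hb i
      · exact Or.inl rfl
  · -- classical achiever
    refine ⟨fun _ => 1, fun _ => 1, fun _ => Or.inl rfl, fun _ => Or.inl rfl, ?_⟩
    have hprod1 : ∀ j : Fin (Fintype.card V),
        (∏ i ∈ Finset.univ.erase u,
          clObsV (fun _ => (1:ℤ)) (fun _ => (1:ℤ)) i (signSeq G (bellA G u j) i)) = 1 := by
      intro j
      rw [Finset.prod_congr rfl (fun i _ => ?_), Finset.prod_const_one]
      unfold clObsV
      split_ifs <;> rfl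
    have hterm : ∀ j : Fin (Fintype.card V),
        (m j : ℤ) * (((1:ℤ) + signSeq G (bellA G u j) u * 1) *
          ∏ i ∈ Finset.univ.erase u,
            clObsV (fun _ => (1:ℤ)) (fun _ => (1:ℤ)) i (signSeq G (bellA G u j) i)) =
        if signSeq G (bellA G u j) u = 1 then 2 * (m j : ℤ) else 0 := by
      intro j
      rw [hprod1 j, mul_one]
      rcases hsign j with h | h
      · rw [h, if_pos rfl]; ring
      · rw [h, if_neg (by decide : ¬ (-1 : ℤ) = 1)]; ring
    rw [Finset.sum_congr rfl (fun j _ => hterm j), Finset.sum_ite, Finset.sum_const_zero,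
      add_zero]
    have : (∑ j ∈ Finset.univ.filter
        (fun j => signSeq G (bellA G u j) u = 1), 2 * (m j : ℤ)) = 2 * (W : ℤ) := by
      rw [← Finset.mul_sum]
      congr 1
      exact_mod_cast congrArg (Nat.cast : ℕ → ℤ) hsumP
    exact this
  · -- quantum value
    have hop : ∀ j : Fin (Fintype.card V),
        ((idealA {u} u + signSeq G (bellA G u j) u • idealB {u} u) *
          ((Finset.univ.erase u).toList.map
            (fun i => obsV (idealA {u}) (idealB {u}) i
              (signSeq G (bellA G u j) i))).prod) (graphState G) =
        ((Real.sqrt 2 : ℝ) : ℂ) • graphState G :=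
      fun j => op_eigen G (bellA G u j) (bellA_indep G u j) u (hsign j)
    rw [LinearMap.sum_apply]
    have happ : ∀ j : Fin (Fintype.card V),
        (m j • ((idealA {u} u + signSeq G (bellA G u j) u • idealB {u} u) *
          ((Finset.univ.erase u).toList.map
            (fun i => obsV (idealA {u}) (idealB {u}) i
              (signSeq G (bellA G u j) i))).prod)) (graphState G) =
        ((m j : ℂ) * ((Real.sqrt 2 : ℝ) : ℂ)) • graphState G := by
      intro j
      rw [LinearMap.smul_apply, hop j, ← Nat.cast_smul_eq_nsmul ℂ (m j), smul_smul]
    rw [Finset.sum_congr rfl (fun j _ => happ j), ← Finset.sum_smul, ← Finset.sum_mul]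
    rw [inner_smul_right, gs_inner G, mul_one]
    have hmc : (∑ j : Fin (Fintype.card V), (m j : ℂ)) = ((2 * W : ℕ) : ℂ) := by
      rw [← Nat.cast_sum]
      exact_mod_cast congrArg (Nat.cast : ℕ → ℂ) hmtot
    rw [hmc]
    push_cast
    ring

end
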